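/- If $X \subseteq \binom{[n]}{k}$ is an order ideal in the Gale order (i.e., $y \in X$ and $x \leq y$ imply $x \in X$), then any linear extension of the Gale order on $X$ is a shelling order. -/

import Mathlib

/-- Increasing enumeration of a finite set of naturals. -/
def sortedL (x : Finset ℕ) : List ℕ := x.sort (· ≤ ·)

/-- The Gale (Bruhat) order on finite subsets of ℕ: componentwise comparison of
the increasing enumerations. -/
def GaleLE (x y : Finset ℕ) : Prop :=
  ∀ i (hx : i < (sortedL x).length) (hy : i < (sortedL y).length),
    (sortedL x).get ⟨i, hx⟩ ≤ (sortedL y).get ⟨i, hy⟩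

def GaleLT (x y : Finset ℕ) : Prop := GaleLE x y ∧ x ≠ y

/-- `C` is a shelling order: for all `i < j` there is `z < j` with
`|C z ∩ C j| = k - 1` and `C i ∩ C j ⊆ C z ∩ C j`. -/
def IsShellingOrder (k : ℕ) {h : ℕ} (C : Fin h → Finset ℕ) : Prop :=
  ∀ i j : Fin h, i < j → ∃ z : Fin h, z < j ∧
    ((C z ∩ C j).card = k - 1 ∧ C i ∩ C j ⊆ C z ∩ C j)

/-- Any linear extension of the Gale order on an order ideal of `k`-subsets of
`[n]` is a shelling order. -/
lemma card_filter_eq_countP (x : Finset ℕ) (t : ℕ) :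
    (x.filter (· ≤ t)).card = (sortedL x).countP (fun a => a ≤ t) := by
  have h1 : (x.filter (· ≤ t)).card = Multiset.countP (fun a => a ≤ t) x.val := by
    rw [Multiset.countP_eq_card_filter]; rfl
  rw [h1]
  have h2 : x.val = (x.toList : Multiset ℕ) := (Multiset.coe_toList _).symm
  rw [h2, Multiset.coe_countP]
  exact (List.Perm.countP_eq _ (Finset.sort_perm_toList (s := x) (r := (· ≤ ·)))).symm

lemma gale_of_counts (x y : Finset ℕ)
    (h : ∀ t, (y.filter (· ≤ t)).card ≤ (x.filter (· ≤ t)).card) : GaleLE x y := by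
  intro i hx hy
  set l := sortedL x with hl
  set m := sortedL y with hm
  have hsl : l.Pairwise (· ≤ ·) := Finset.pairwise_sort _ _
  have hsm : m.Pairwise (· ≤ ·) := Finset.pairwise_sort _ _
  set t := m.get ⟨i, hy⟩ with ht
  have hmc : i + 1 ≤ m.countP (fun a => a ≤ t) := by
    have : (m.take (i+1)).countP (fun a => a ≤ t) = (m.take (i+1)).length := by
      rw [List.countP_eq_length]
      intro a ha
      rw [List.mem_take_iff_getElem] at ha
      obtain ⟨j, hj, rfl⟩ := ha
      have hj' : j < m.length := lt_of_lt_of_le (Nat.lt_min.mp hj).2 le_rfl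
      have : m.get ⟨j, hj'⟩ ≤ m.get ⟨i, hy⟩ := hsm.rel_get_of_le (by
        simpa using Nat.le_of_lt_succ (Nat.lt_min.mp hj).1)
      simpa [ht] using this
    have hsplit : m.countP (fun a => a ≤ t) =
        (m.take (i+1)).countP (fun a => a ≤ t) + (m.drop (i+1)).countP (fun a => a ≤ t) := by
      conv_lhs => rw [← List.take_append_drop (i+1) m]
      rw [List.countP_append]
    rw [hsplit, this, List.length_take]
    omega
  have hlc : i + 1 ≤ l.countP (fun a => a ≤ t) := by
    have h2 := h t
    rw [card_filter_eq_countP, card_filter_eq_countP, ← hl, ← hm] at h2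
    exact le_trans hmc h2
  by_contra hcon
  push_neg at hcon
  have hdrop : (l.drop i).countP (fun a => a ≤ t) = 0 := by
    rw [List.countP_eq_zero]
    intro a ha
    rw [List.mem_iff_getElem] at ha
    obtain ⟨j, hj, rfl⟩ := ha
    have hij : i + j < l.length := by rw [List.length_drop] at hj; omega
    have : l.get ⟨i, hx⟩ ≤ l.get ⟨i + j, hij⟩ := hsl.rel_get_of_le (by simp)
    rw [List.getElem_drop]
    simp only [decide_eq_true_eq]
    intro hle
    exact absurd (le_trans (this.trans hle) le_rfl) (not_le.mpr hcon)
  have hsplit : l.countP (fun a => a ≤ t) =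
      (l.take i).countP (fun a => a ≤ t) + (l.drop i).countP (fun a => a ≤ t) := by
    conv_lhs => rw [← List.take_append_drop i l]
    rw [List.countP_append]
  have : l.countP (fun a => a ≤ t) ≤ i := by
    rw [hsplit, hdrop]
    have := List.countP_le_length (l := l.take i) (p := fun a => a ≤ t)
    rw [List.length_take] at this
    omega
  omega

theorem ideal_linear_extension_is_shelling
    (n k h : ℕ) (X : Set (Finset ℕ))
    (hX : ∀ x ∈ X, x ⊆ Finset.Icc 1 n ∧ x.card = k)
    (hideal : ∀ y ∈ X, ∀ x : Finset ℕ, x ⊆ Finset.Icc 1 n → x.card = k →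
      GaleLE x y → x ∈ X)
    (L : Fin h → Finset ℕ)
    (hinj : Function.Injective L)
    (himg : ∀ x, x ∈ X ↔ ∃ i, L i = x)
    (hlin : ∀ i j : Fin h, GaleLT (L i) (L j) → i < j) :
    IsShellingOrder k L := by
  intro i j hij
  set A := L i with hA
  set B := L j with hB
  have hBX : B ∈ X := (himg B).mpr ⟨j, rfl⟩
  have hAX : A ∈ X := (himg A).mpr ⟨i, rfl⟩
  obtain ⟨hBsub, hBcard⟩ := hX B hBX
  obtain ⟨hAsub, hAcard⟩ := hX A hAX
  have hne : A ≠ B := fun e => absurd (hinj e) (Fin.ne_of_lt hij)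
  -- B \ A is nonempty
  have hDne : (B \ A).Nonempty := by
    rw [Finset.sdiff_nonempty]
    intro hsub
    exact hne (Finset.eq_of_subset_of_card_le hsub (by omega)).symm
  by_cases hex : ∃ b ∈ B \ A, ∃ b', 1 ≤ b' ∧ b' < b ∧ b' ∉ B
  · obtain ⟨b, hbBA, b', hb'1, hb'b, hb'B⟩ := hex
    rw [Finset.mem_sdiff] at hbBA
    obtain ⟨hbB, hbA⟩ := hbBA
    set B' := insert b' (B.erase b) with hB'
    have hb'E : b' ∉ B.erase b := fun hmem => hb'B (Finset.mem_of_mem_erase hmem)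
    have hcard' : B'.card = k := by
      rw [hB', Finset.card_insert_of_notMem hb'E, Finset.card_erase_of_mem hbB, hBcard]
      have : 1 ≤ k := by rw [← hBcard]; exact Finset.card_pos.mpr ⟨b, hbB⟩
      omega
    have hsub' : B' ⊆ Finset.Icc 1 n := by
      intro c hc
      rw [hB', Finset.mem_insert] at hc
      rcases hc with rfl | hc
      · have hb : b ∈ Finset.Icc 1 n := hBsub hbB
        rw [Finset.mem_Icc] at *
        omega
      · exact hBsub (Finset.mem_of_mem_erase hc)
    have hgale : GaleLE B' B := by
      apply gale_of_counts
      intro t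
      have hBsplit : B.filter (· ≤ t) =
          if b ≤ t then insert b ((B.erase b).filter (· ≤ t)) else (B.erase b).filter (· ≤ t) := by
        conv_lhs => rw [← Finset.insert_erase hbB]
        rw [Finset.filter_insert]
      have hB'split : B'.filter (· ≤ t) =
          if b' ≤ t then insert b' ((B.erase b).filter (· ≤ t)) else (B.erase b).filter (· ≤ t) := by
        rw [hB', Finset.filter_insert]
      rw [hBsplit, hB'split]
      by_cases hbt : b ≤ t
      · have hb't : b' ≤ t := le_of_lt (lt_of_lt_of_le hb'b hbt)
        rw [if_pos hbt, if_pos hb't,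
          Finset.card_insert_of_notMem
            (fun hm => Finset.notMem_erase b B (Finset.mem_filter.mp hm).1),
          Finset.card_insert_of_notMem (fun hm => hb'E (Finset.mem_filter.mp hm).1)]
      · rw [if_neg hbt]
        by_cases hb't : b' ≤ t
        · rw [if_pos hb't]
          exact le_trans (Nat.le_succ _) (le_of_eq
            (Finset.card_insert_of_notMem (fun hm => hb'E (Finset.mem_filter.mp hm).1)).symm)
        · rw [if_neg hb't]
    have hne' : B' ≠ B := by
      intro e
      have : b ∈ B' := e ▸ hbB
      rw [hB', Finset.mem_insert] at this
      rcases this with rfl | hc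
      · omega
      · exact (Finset.notMem_erase b B) hc
    have hB'X : B' ∈ X := hideal B hBX B' hsub' hcard' hgale
    obtain ⟨z, hz⟩ := (himg B').mp hB'X
    have hzj : z < j := hlin z j (by rw [hz]; exact ⟨hgale, hne'⟩)
    refine ⟨z, hzj, ?_, ?_⟩
    · rw [hz]
      have hinter : B' ∩ B = B.erase b := by
        rw [hB', Finset.insert_inter_of_notMem hb'B,
          Finset.inter_eq_left.mpr (Finset.erase_subset b B)]
      rw [hinter, Finset.card_erase_of_mem hbB, hBcard]
    · rw [hz]
      have hinter : B' ∩ B = B.erase b := by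
        rw [hB', Finset.insert_inter_of_notMem hb'B,
          Finset.inter_eq_left.mpr (Finset.erase_subset b B)]
      rw [hinter]
      intro c hc
      rw [Finset.mem_inter] at hc
      exact Finset.mem_erase.mpr ⟨fun e => hbA (e ▸ hc.1), hc.2⟩
  · -- degenerate case: GaleLE B A, contradiction
    exfalso
    push_neg at hex
    obtain ⟨b0, hb0⟩ := Finset.exists_max_image (B \ A) id hDne
    obtain ⟨hb0mem, hb0max⟩ := hb0
    have hfull : ∀ c, 1 ≤ c → c ≤ b0 → c ∈ B := by
      intro c h1 h2
      rcases eq_or_lt_of_le h2 with rfl | hlt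
      · exact (Finset.mem_sdiff.mp hb0mem).1
      · by_contra hc
        exact hc (hex b0 hb0mem c h1 hlt)
    have hgaleBA : GaleLE B A := by
      apply gale_of_counts
      intro t
      by_cases ht : b0 ≤ t
      · -- split into inter and sdiff parts
        have hsplitA : (A.filter (· ≤ t)).card =
            ((A ∩ B).filter (· ≤ t)).card + ((A \ B).filter (· ≤ t)).card := by
          have hdisj : Disjoint ((A ∩ B).filter (· ≤ t)) ((A \ B).filter (· ≤ t)) := by
            rw [Finset.disjoint_left]
            intro a h1 h2
            simp only [Finset.mem_filter, Finset.mem_inter, Finset.mem_sdiff] at h1 h2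
            tauto
          have hun : (A ∩ B).filter (· ≤ t) ∪ (A \ B).filter (· ≤ t) = A.filter (· ≤ t) := by
            ext c
            simp only [Finset.mem_union, Finset.mem_filter, Finset.mem_inter, Finset.mem_sdiff]
            by_cases hcB : c ∈ B <;> tauto
          rw [← hun, Finset.card_union_of_disjoint hdisj]
        have hsplitB : (B.filter (· ≤ t)).card =
            ((B ∩ A).filter (· ≤ t)).card + ((B \ A).filter (· ≤ t)).card := by
          have hdisj : Disjoint ((B ∩ A).filter (· ≤ t)) ((B \ A).filter (· ≤ t)) := by
            rw [Finset.disjoint_left]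
            intro a h1 h2
            simp only [Finset.mem_filter, Finset.mem_inter, Finset.mem_sdiff] at h1 h2
            tauto
          have hun : (B ∩ A).filter (· ≤ t) ∪ (B \ A).filter (· ≤ t) = B.filter (· ≤ t) := by
            ext c
            simp only [Finset.mem_union, Finset.mem_filter, Finset.mem_inter, Finset.mem_sdiff]
            by_cases hcB : c ∈ A <;> tauto
          rw [← hun, Finset.card_union_of_disjoint hdisj]
        rw [hsplitA, hsplitB, Finset.inter_comm B A]
        have h1 : ((A \ B).filter (· ≤ t)).card ≤ (B \ A).card := by
          calc ((A \ B).filter (· ≤ t)).card ≤ (A \ B).card :=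
                Finset.card_filter_le _ _
            _ = (B \ A).card := Finset.card_sdiff_comm (by omega)
        have h2 : ((B \ A).filter (· ≤ t)).card = (B \ A).card := by
          congr 1
          apply Finset.filter_true_of_mem
          intro c hc
          exact le_trans (hb0max c hc) ht
        omega
      · apply Finset.card_le_card
        intro c hc
        rw [Finset.mem_filter] at *
        refine ⟨hfull c ?_ ?_, hc.2⟩
        · have : c ∈ Finset.Icc 1 n := hAsub hc.1
          rw [Finset.mem_Icc] at this; omega
        · omega
    have : j < i := hlin j i ⟨hgaleBA, fun e => hne e.symm⟩
    omega
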